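/- Let k be a commutative ring of characteristic 2, A a differential graded algebra over k with differential μ₁ and multiplication μ₂, and let (N, δ), (N′, δ′), (N″, δ″), (N‴, δ‴) be left type D structures over A. For a k-linear map f : N → A ⊗_k N′ define Df = (μ₁ ⊗ id_{N′}) ∘ f + (μ₂ ⊗ id_{N′}) ∘ (id_A ⊗ δ′) ∘ f + (μ₂ ⊗ id_{N′}) ∘ (id_A ⊗ f) ∘ δ, and for g : N′ → A ⊗_k N″ define the composition f ⊚ g = (μ₂ ⊗ id_{N″}) ∘ (id_A ⊗ g) ∘ f : N → A ⊗_k N″. Then: (i) D(Df) = 0, so Hom_k(N, A ⊗_k N′) with differential D is a chain complex; (ii) D(f ⊚ g) = (Df) ⊚ g + f ⊚ (Dg); (iii) composition is associative: (f ⊚ g) ⊚ h = f ⊚ (g ⊚ h) for any h : N″ → A ⊗_k N‴. Hence type D structures over A, with these hom-complexes and this composition, form a differential graded category. -/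

import Mathlib

open TensorProduct

noncomputable section

variable (k : Type*) [CommRing k]
variable (A : Type*) [Ring A] [Algebra k A]

/-- The operator `(μ₂ ⊗ id) ∘ (id_A ⊗ g) : A ⊗ N → A ⊗ N'` built from
`g : N → A ⊗ N'`. -/
def mulStep (N : Type*) [AddCommGroup N] [Module k N]
    (N' : Type*) [AddCommGroup N'] [Module k N']
    (g : N →ₗ[k] A ⊗[k] N') : A ⊗[k] N →ₗ[k] A ⊗[k] N' :=
  LinearMap.rTensor N' (LinearMap.mul' k A) ∘ₗ
    (TensorProduct.assoc k A A N').symm.toLinearMap ∘ₗ LinearMap.lTensor A g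

/-- The type D structure compatibility condition. -/
def IsTypeD (μ₁ : A →ₗ[k] A) {N : Type*} [AddCommGroup N] [Module k N]
    (δ : N →ₗ[k] A ⊗[k] N) : Prop :=
  LinearMap.rTensor N μ₁ ∘ₗ δ + mulStep k A N N δ ∘ₗ δ = 0

/-- The differential `D` on the morphism complex `Hom(N, A ⊗ N')`:
`Df = (μ₁ ⊗ id) ∘ f + (μ₂ ⊗ id) ∘ (id ⊗ δ') ∘ f + (μ₂ ⊗ id) ∘ (id ⊗ f) ∘ δ`. -/
def DOp (μ₁ : A →ₗ[k] A)
    {N : Type*} [AddCommGroup N] [Module k N]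
    {N' : Type*} [AddCommGroup N'] [Module k N']
    (δ : N →ₗ[k] A ⊗[k] N) (δ' : N' →ₗ[k] A ⊗[k] N')
    (f : N →ₗ[k] A ⊗[k] N') : N →ₗ[k] A ⊗[k] N' :=
  LinearMap.rTensor N' μ₁ ∘ₗ f + mulStep k A N' N' δ' ∘ₗ f + mulStep k A N N' f ∘ₗ δ

/-- The composition `f ⊚ g = (μ₂ ⊗ id) ∘ (id_A ⊗ g) ∘ f` of type D structure morphisms. -/
def compD {N : Type*} [AddCommGroup N] [Module k N]
    {N' : Type*} [AddCommGroup N'] [Module k N']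
    {N'' : Type*} [AddCommGroup N''] [Module k N'']
    (f : N →ₗ[k] A ⊗[k] N') (g : N' →ₗ[k] A ⊗[k] N'') : N →ₗ[k] A ⊗[k] N'' :=
  mulStep k A N' N'' g ∘ₗ f

section Helpers
open LinearMap
variable {N : Type*} [AddCommGroup N] [Module k N]
variable {N' : Type*} [AddCommGroup N'] [Module k N']
variable {N'' : Type*} [AddCommGroup N''] [Module k N'']

lemma mulStep_tmul (f : N →ₗ[k] A ⊗[k] N') (a : A) (n : N) :
    mulStep k A N N' f (a ⊗ₜ n) = rTensor N' (mulLeft k a) (f n) := by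
  simp only [mulStep, coe_comp, Function.comp_apply, lTensor_tmul]
  induction f n using TensorProduct.induction_on with
  | zero => simp
  | tmul b m => simp [mul'_apply]
  | add x y hx hy => simp only [tmul_add, map_add, hx, hy]

lemma mulStep_rTensor_mulLeft (g : N' →ₗ[k] A ⊗[k] N'') (a : A) (x : A ⊗[k] N') :
    mulStep k A N' N'' g (rTensor N' (mulLeft k a) x) =
      rTensor N'' (mulLeft k a) (mulStep k A N' N'' g x) := by
  induction x using TensorProduct.induction_on with
  | zero => simp
  | tmul b m =>
      simp only [rTensor_tmul, mulLeft_apply, mulStep_tmul, ← rTensor_comp_apply]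
      congr 1
      ext c
      simp [mul_assoc]
  | add x y hx hy => simp only [map_add, hx, hy]

lemma mulStep_mulStep (f : N →ₗ[k] A ⊗[k] N') (g : N' →ₗ[k] A ⊗[k] N'') :
    mulStep k A N' N'' g ∘ₗ mulStep k A N N' f =
      mulStep k A N N'' (mulStep k A N' N'' g ∘ₗ f) := by
  apply TensorProduct.ext'
  intro a n
  simp only [coe_comp, Function.comp_apply, mulStep_tmul, mulStep_rTensor_mulLeft]

lemma mulStep_add (f g : N →ₗ[k] A ⊗[k] N') :
    mulStep k A N N' (f + g) = mulStep k A N N' f + mulStep k A N N' g := by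
  simp only [mulStep, lTensor_add, comp_add]

lemma mulStep_neg (f : N →ₗ[k] A ⊗[k] N') :
    mulStep k A N N' (-f) = -mulStep k A N N' f := by
  simp only [mulStep, lTensor_neg, comp_neg]

lemma mulStep_leibniz (μ₁ : A →ₗ[k] A) (hLeib : ∀ a b : A, μ₁ (a * b) = μ₁ a * b + a * μ₁ b)
    (f : N →ₗ[k] A ⊗[k] N') :
    rTensor N' μ₁ ∘ₗ mulStep k A N N' f =
      mulStep k A N N' (rTensor N' μ₁ ∘ₗ f) + mulStep k A N N' f ∘ₗ rTensor N μ₁ := by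
  apply TensorProduct.ext'
  intro a n
  simp only [coe_comp, Function.comp_apply, LinearMap.add_apply, mulStep_tmul, rTensor_tmul,
    ← rTensor_comp_apply]
  have h : (μ₁ ∘ₗ mulLeft k a : A →ₗ[k] A) = mulLeft k a ∘ₗ μ₁ + mulLeft k (μ₁ a) := by
    ext b; simp [hLeib, add_comm]
  rw [h, rTensor_add, LinearMap.add_apply, rTensor_comp_apply]

lemma ch2 [CharP k 2] {M : Type*} [AddCommGroup M] [Module k M] (x : M) : x + x = 0 := by
  have : (2 : k) • x = 0 := by
    rw [show (2 : k) = 0 from by exact_mod_cast CharP.cast_eq_zero k 2, zero_smul]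
  rwa [two_smul] at this

lemma ch2z [CharP k 2] {M : Type*} [AddCommGroup M] [Module k M] (x : M) : (2 : ℤ) • x = 0 := by
  rw [two_zsmul]; exact ch2 k x

end Helpers

/-- over a commutative ring of characteristic 2, for a differential graded
algebra `A` and left type D structures `N, N′, N″, N‴` over `A`: (i) `D ∘ D = 0`, so each
`Hom_k(N, A ⊗ N′)` is a chain complex; (ii) `D(f ⊚ g) = (Df) ⊚ g + f ⊚ (Dg)`; (iii)
composition `⊚` is associative.  Hence type D structures over `A` form a differential
graded category. -/
theorem typeD_dg_category [CharP k 2] (μ₁ : A →ₗ[k] A)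
    (hsq : μ₁ ∘ₗ μ₁ = 0)
    (hLeib : ∀ a b : A, μ₁ (a * b) = μ₁ a * b + a * μ₁ b)
    (N : Type*) [AddCommGroup N] [Module k N]
    (N' : Type*) [AddCommGroup N'] [Module k N']
    (N'' : Type*) [AddCommGroup N''] [Module k N'']
    (N''' : Type*) [AddCommGroup N'''] [Module k N''']
    (δ : N →ₗ[k] A ⊗[k] N) (δ' : N' →ₗ[k] A ⊗[k] N')
    (δ'' : N'' →ₗ[k] A ⊗[k] N'') (δ''' : N''' →ₗ[k] A ⊗[k] N''')
    (hδ : IsTypeD k A μ₁ δ) (hδ' : IsTypeD k A μ₁ δ')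
    (hδ'' : IsTypeD k A μ₁ δ'') (hδ''' : IsTypeD k A μ₁ δ''') :
    (∀ f : N →ₗ[k] A ⊗[k] N', DOp k A μ₁ δ δ' (DOp k A μ₁ δ δ' f) = 0) ∧
    (∀ (f : N →ₗ[k] A ⊗[k] N') (g : N' →ₗ[k] A ⊗[k] N''),
      DOp k A μ₁ δ δ'' (compD k A f g) =
        compD k A (DOp k A μ₁ δ δ' f) g + compD k A f (DOp k A μ₁ δ' δ'' g)) ∧
    (∀ (f : N →ₗ[k] A ⊗[k] N') (g : N' →ₗ[k] A ⊗[k] N'')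
      (h : N'' →ₗ[k] A ⊗[k] N'''),
      compD k A (compD k A f g) h = compD k A f (compD k A g h)) := by
  have hδ0 : LinearMap.rTensor N μ₁ ∘ₗ δ + mulStep k A N N δ ∘ₗ δ = 0 := hδ
  have hδ'0 : LinearMap.rTensor N' μ₁ ∘ₗ δ' + mulStep k A N' N' δ' ∘ₗ δ' = 0 := hδ'
  have hδ''0 : LinearMap.rTensor N'' μ₁ ∘ₗ δ'' + mulStep k A N'' N'' δ'' ∘ₗ δ'' = 0 := hδ''
  have hδn : mulStep k A N N δ ∘ₗ δ = -(LinearMap.rTensor N μ₁ ∘ₗ δ) :=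
    eq_neg_of_add_eq_zero_right (α := N →ₗ[k] A ⊗[k] N) hδ0
  have hδ'n : mulStep k A N' N' δ' ∘ₗ δ' = -(LinearMap.rTensor N' μ₁ ∘ₗ δ') :=
    eq_neg_of_add_eq_zero_right (α := N' →ₗ[k] A ⊗[k] N') hδ'0
  have hδ''n : mulStep k A N'' N'' δ'' ∘ₗ δ'' = -(LinearMap.rTensor N'' μ₁ ∘ₗ δ'') :=
    eq_neg_of_add_eq_zero_right (α := N'' →ₗ[k] A ⊗[k] N'') hδ''0
  refine ⟨?_, ?_, ?_⟩
  · intro f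
    have h1 : LinearMap.rTensor N' μ₁ ∘ₗ (LinearMap.rTensor N' μ₁ ∘ₗ f) = 0 := by
      rw [← LinearMap.comp_assoc, ← LinearMap.rTensor_comp, hsq, LinearMap.rTensor_zero,
        LinearMap.zero_comp]
    have h2 : LinearMap.rTensor N' μ₁ ∘ₗ (mulStep k A N' N' δ' ∘ₗ f) =
        mulStep k A N' N' (LinearMap.rTensor N' μ₁ ∘ₗ δ') ∘ₗ f +
          mulStep k A N' N' δ' ∘ₗ (LinearMap.rTensor N' μ₁ ∘ₗ f) := by
      rw [← LinearMap.comp_assoc, mulStep_leibniz k A μ₁ hLeib δ', LinearMap.add_comp,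
        LinearMap.comp_assoc]
    have h3 : LinearMap.rTensor N' μ₁ ∘ₗ (mulStep k A N N' f ∘ₗ δ) =
        mulStep k A N N' (LinearMap.rTensor N' μ₁ ∘ₗ f) ∘ₗ δ +
          mulStep k A N N' f ∘ₗ (LinearMap.rTensor N μ₁ ∘ₗ δ) := by
      rw [← LinearMap.comp_assoc, mulStep_leibniz k A μ₁ hLeib f, LinearMap.add_comp,
        LinearMap.comp_assoc]
    have h5 : mulStep k A N' N' δ' ∘ₗ (mulStep k A N' N' δ' ∘ₗ f) =
        mulStep k A N' N' (mulStep k A N' N' δ' ∘ₗ δ') ∘ₗ f := by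
      rw [← LinearMap.comp_assoc, mulStep_mulStep]
    have h6 : mulStep k A N' N' δ' ∘ₗ (mulStep k A N N' f ∘ₗ δ) =
        mulStep k A N N' (mulStep k A N' N' δ' ∘ₗ f) ∘ₗ δ := by
      rw [← LinearMap.comp_assoc, mulStep_mulStep]
    have h9 : mulStep k A N N' (mulStep k A N N' f ∘ₗ δ) ∘ₗ δ =
        mulStep k A N N' f ∘ₗ (mulStep k A N N δ ∘ₗ δ) := by
      rw [← mulStep_mulStep, LinearMap.comp_assoc]
    simp only [DOp, mulStep_add, LinearMap.comp_add, LinearMap.add_comp]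
    rw [h1, h2, h3, h5, h6, h9, hδn, hδ'n, mulStep_neg, LinearMap.neg_comp,
      LinearMap.comp_neg]
    abel_nf
    simp [ch2z k]
  · intro f g
    have g2 : LinearMap.rTensor N'' μ₁ ∘ₗ (mulStep k A N' N'' g ∘ₗ f) =
        mulStep k A N' N'' (LinearMap.rTensor N'' μ₁ ∘ₗ g) ∘ₗ f +
          mulStep k A N' N'' g ∘ₗ (LinearMap.rTensor N' μ₁ ∘ₗ f) := by
      rw [← LinearMap.comp_assoc, mulStep_leibniz k A μ₁ hLeib g, LinearMap.add_comp,
        LinearMap.comp_assoc]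
    have g5 : mulStep k A N'' N'' δ'' ∘ₗ (mulStep k A N' N'' g ∘ₗ f) =
        mulStep k A N' N'' (mulStep k A N'' N'' δ'' ∘ₗ g) ∘ₗ f := by
      rw [← LinearMap.comp_assoc, mulStep_mulStep]
    have g9 : mulStep k A N N'' (mulStep k A N' N'' g ∘ₗ f) ∘ₗ δ =
        mulStep k A N' N'' g ∘ₗ (mulStep k A N N' f ∘ₗ δ) := by
      rw [← mulStep_mulStep, LinearMap.comp_assoc]
    have gx : mulStep k A N' N'' g ∘ₗ (mulStep k A N' N' δ' ∘ₗ f) =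
        mulStep k A N' N'' (mulStep k A N' N'' g ∘ₗ δ') ∘ₗ f := by
      rw [← LinearMap.comp_assoc, mulStep_mulStep]
    simp only [compD, DOp, mulStep_add, LinearMap.comp_add, LinearMap.add_comp]
    rw [g2, g5, g9, gx]
    abel_nf
    simp [ch2z k]
  · intro f g h
    simp only [compD]
    rw [← mulStep_mulStep, LinearMap.comp_assoc]

end
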